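/- Let A, B, C, D be d×d positive semidefinite matrices with operator norms at most 1, and let P, Q be orthogonal projectors. If (1/√d)‖A+B−P‖_F ≤ ε, (1/√d)‖A+C−Q‖_F ≤ ε, and (1/√d)‖A+B+C+D−I‖_F ≤ ε, then (1/√d)‖AB‖_F = O(ε). -/

import Mathlib

open scoped ComplexOrder

noncomputable def frobNorm {m k : Type*} [Fintype m] [Fintype k] (M : Matrix m k ℂ) : ℝ :=
  Real.sqrt (∑ i, ∑ j, Complex.normSq (M i j))

noncomputable def specNorm {m : Type*} [Fintype m] [DecidableEq m] (M : Matrix m m ℂ) : ℝ :=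
  ‖Matrix.toEuclideanCLM (𝕜 := ℂ) M‖

set_option synthInstance.maxHeartbeats 1000000
set_option maxHeartbeats 1000000

namespace Stmt6Aux

open Matrix

variable {d : ℕ}

/-- Embedding of matrices into Euclidean space. -/
noncomputable def emb (M : Matrix (Fin d) (Fin d) ℂ) : EuclideanSpace ℂ (Fin d × Fin d) :=
  (WithLp.equiv 2 _).symm (fun p => M p.1 p.2)

lemma emb_apply (M : Matrix (Fin d) (Fin d) ℂ) (p : Fin d × Fin d) :
    emb M p = M p.1 p.2 := rfl

lemma emb_add (M N : Matrix (Fin d) (Fin d) ℂ) : emb (M + N) = emb M + emb N := rfl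
lemma emb_neg (M : Matrix (Fin d) (Fin d) ℂ) : emb (-M) = -emb M := rfl

lemma frob_eq_norm_emb (M : Matrix (Fin d) (Fin d) ℂ) : frobNorm M = ‖emb M‖ := by
  rw [EuclideanSpace.norm_eq, frobNorm]
  congr 1
  rw [Fintype.sum_prod_type]
  refine Finset.sum_congr rfl fun i _ => Finset.sum_congr rfl fun j _ => ?_
  rw [Complex.normSq_eq_norm_sq]
  rfl

lemma frob_nonneg (M : Matrix (Fin d) (Fin d) ℂ) : 0 ≤ frobNorm M :=
  Real.sqrt_nonneg _

lemma inner_emb (M N : Matrix (Fin d) (Fin d) ℂ) :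
    (inner ℂ (emb M) (emb N) : ℂ) = (Mᴴ * N).trace := by
  rw [PiLp.inner_apply, Matrix.trace]
  rw [Fintype.sum_prod_type]
  rw [Finset.sum_comm]
  refine Finset.sum_congr rfl fun j _ => ?_
  simp [Matrix.diag, Matrix.mul_apply, emb_apply, Matrix.conjTranspose_apply, RCLike.inner_apply,
    mul_comm]

lemma ip_le (M N : Matrix (Fin d) (Fin d) ℂ) :
    ((Mᴴ * N).trace).re ≤ frobNorm M * frobNorm N := by
  rw [← inner_emb, frob_eq_norm_emb, frob_eq_norm_emb]
  exact re_inner_le_norm (𝕜 := ℂ) _ _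

lemma frob_sq (M : Matrix (Fin d) (Fin d) ℂ) :
    frobNorm M * frobNorm M = ((Mᴴ * M).trace).re := by
  rw [← inner_emb, frob_eq_norm_emb]
  exact (inner_self_eq_norm_mul_norm (𝕜 := ℂ) _).symm

lemma frob_add_le (M N : Matrix (Fin d) (Fin d) ℂ) :
    frobNorm (M + N) ≤ frobNorm M + frobNorm N := by
  rw [frob_eq_norm_emb, frob_eq_norm_emb, frob_eq_norm_emb, emb_add]
  exact norm_add_le _ _

lemma frob_neg (M : Matrix (Fin d) (Fin d) ℂ) : frobNorm (-M) = frobNorm M := by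
  rw [frob_eq_norm_emb, frob_eq_norm_emb, emb_neg, norm_neg]

lemma frob_sub_le (M N : Matrix (Fin d) (Fin d) ℂ) :
    frobNorm (M - N) ≤ frobNorm M + frobNorm N := by
  rw [sub_eq_add_neg]
  calc frobNorm (M + -N) ≤ frobNorm M + frobNorm (-N) := frob_add_le _ _
  _ = frobNorm M + frobNorm N := by rw [frob_neg]

lemma frob_conjTranspose (M : Matrix (Fin d) (Fin d) ℂ) : frobNorm Mᴴ = frobNorm M := by
  rw [frobNorm, frobNorm, Finset.sum_comm]
  congr 1
  refine Finset.sum_congr rfl fun i _ => Finset.sum_congr rfl fun j _ => ?_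
  simp [Matrix.conjTranspose_apply, Complex.normSq_conj]



noncomputable def embv (x : Fin d → ℂ) : EuclideanSpace ℂ (Fin d) :=
  (WithLp.equiv 2 _).symm x

lemma inner_embv (x y : Fin d → ℂ) : (inner ℂ (embv x) (embv y) : ℂ) = star x ⬝ᵥ y := by
  rw [PiLp.inner_apply, dotProduct]
  exact Finset.sum_congr rfl fun i _ => by
    simp [embv, RCLike.inner_apply, mul_comm]

lemma dot_self_eq (x : Fin d → ℂ) : star x ⬝ᵥ x = ((‖embv x‖ ^ 2 : ℝ) : ℂ) := by
  rw [← inner_embv]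
  exact_mod_cast inner_self_eq_norm_sq_to_K (𝕜 := ℂ) (embv x)

lemma mulVec_norm_le (M : Matrix (Fin d) (Fin d) ℂ) (x : Fin d → ℂ) :
    ‖embv (M *ᵥ x)‖ ≤ specNorm M * ‖embv x‖ := by
  have h : embv (M *ᵥ x) = Matrix.toEuclideanCLM (𝕜 := ℂ) M (embv x) := by
    rfl
  rw [h]
  exact (Matrix.toEuclideanCLM (𝕜 := ℂ) M).le_opNorm _

lemma spec_nonneg (M : Matrix (Fin d) (Fin d) ℂ) : 0 ≤ specNorm M := norm_nonneg _

/-- `t²·1 - MᴴM` is PSD when `specNorm M ≤ t`. -/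
lemma psd_shift (M : Matrix (Fin d) (Fin d) ℂ) (t : ℝ) (ht : specNorm M ≤ t) :
    PosSemidef (((t : ℂ) ^ 2) • 1 - Mᴴ * M) := by
  refine Matrix.PosSemidef.of_dotProduct_mulVec_nonneg ?_ ?_
  · have h1 : (((t : ℂ) ^ 2) • (1 : Matrix (Fin d) (Fin d) ℂ))ᴴ = ((t : ℂ) ^ 2) • 1 := by
      rw [Matrix.conjTranspose_smul, Matrix.conjTranspose_one]
      congr 1
      simp [← Complex.ofReal_pow, Complex.conj_ofReal]
    rw [Matrix.IsHermitian, Matrix.conjTranspose_sub, h1, Matrix.conjTranspose_mul,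
      Matrix.conjTranspose_conjTranspose]
  · intro x
    have key : star x ⬝ᵥ ((((t : ℂ) ^ 2) • 1 - Mᴴ * M) *ᵥ x)
        = ((t ^ 2 * ‖embv x‖ ^ 2 - ‖embv (M *ᵥ x)‖ ^ 2 : ℝ) : ℂ) := by
      rw [Matrix.sub_mulVec, dotProduct_sub]
      rw [Matrix.smul_mulVec, Matrix.one_mulVec, dotProduct_smul]
      rw [← Matrix.mulVec_mulVec, Matrix.dotProduct_mulVec (star x) Mᴴ,
        ← Matrix.star_mulVec, dot_self_eq, dot_self_eq, smul_eq_mul]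
      push_cast
      ring
    rw [key]
    rw [Complex.zero_le_real]
    have h2 := mulVec_norm_le M x
    have h4 : ‖embv (M *ᵥ x)‖ ≤ t * ‖embv x‖ :=
      le_trans h2 (mul_le_mul_of_nonneg_right ht (norm_nonneg _))
    nlinarith [norm_nonneg (embv x), norm_nonneg (embv (M *ᵥ x))]

lemma re_trace_psd_nonneg {M : Matrix (Fin d) (Fin d) ℂ} (h : M.PosSemidef) :
    0 ≤ M.trace.re := by
  rw [Matrix.trace]
  rw [Complex.re_sum]
  refine Finset.sum_nonneg fun i _ => ?_
  have hpsd := h.dotProduct_mulVec_nonneg (Pi.single i 1)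
  have hs : star ((Pi.single i 1 : Fin d → ℂ)) = Pi.single i 1 := by
    ext j
    by_cases hj : j = i <;> simp [Pi.single_apply, hj]
  have hv : star ((Pi.single i 1 : Fin d → ℂ)) ⬝ᵥ (M *ᵥ Pi.single i 1) = M i i := by
    rw [hs, single_dotProduct, one_mul]
    simp [Matrix.mulVec, dotProduct_single]
  rw [hv] at hpsd
  simpa [Matrix.diag] using (Complex.le_def.mp hpsd).1

lemma psd_one_sub {A : Matrix (Fin d) (Fin d) ℂ} (hA : A.PosSemidef)
    (h1 : specNorm A ≤ 1) : PosSemidef (1 - A) := by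
  refine Matrix.PosSemidef.of_dotProduct_mulVec_nonneg ?_ ?_
  · rw [Matrix.IsHermitian, Matrix.conjTranspose_sub, Matrix.conjTranspose_one, hA.1]
  · intro x
    have hz := hA.dotProduct_mulVec_nonneg x
    have hzre : star x ⬝ᵥ (A *ᵥ x) = (((star x ⬝ᵥ (A *ᵥ x)).re : ℝ) : ℂ) := by
      have him : (star x ⬝ᵥ (A *ᵥ x)).im = 0 := (Complex.le_def.mp hz).2.symm
      exact Complex.ext rfl (by simpa using him)
    have hle : (star x ⬝ᵥ (A *ᵥ x)).re ≤ ‖embv x‖ ^ 2 := by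
      have hi : star x ⬝ᵥ (A *ᵥ x) = inner ℂ (embv x) (embv (A *ᵥ x)) :=
        (inner_embv x (A *ᵥ x)).symm
      have h2 : (star x ⬝ᵥ (A *ᵥ x)).re ≤ ‖embv x‖ * ‖embv (A *ᵥ x)‖ := by
        rw [hi]; exact re_inner_le_norm (𝕜 := ℂ) _ _
      have h3 := mulVec_norm_le A x
      have h4 : ‖embv (A *ᵥ x)‖ ≤ 1 * ‖embv x‖ :=
        le_trans h3 (mul_le_mul_of_nonneg_right h1 (norm_nonneg _))
      nlinarith [norm_nonneg (embv x), norm_nonneg (embv (A *ᵥ x))]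
    have key : star x ⬝ᵥ ((1 - A) *ᵥ x)
        = ((‖embv x‖ ^ 2 - (star x ⬝ᵥ (A *ᵥ x)).re : ℝ) : ℂ) := by
      rw [Matrix.sub_mulVec, dotProduct_sub, Matrix.one_mulVec, dot_self_eq]
      nth_rewrite 1 [hzre]
      push_cast
      ring
    rw [key, Complex.zero_le_real]
    linarith


lemma le_of_sq {a b : ℝ} (ha : 0 ≤ a) (hb : 0 ≤ b) (h : a * a ≤ b * b) : a ≤ b := by
  nlinarith

lemma eq_of_sq {a b : ℝ} (ha : 0 ≤ a) (hb : 0 ≤ b) (h : a * a = b * b) : a = b :=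
  le_antisymm (le_of_sq ha hb h.le) (le_of_sq hb ha h.ge)

open scoped MatrixOrder Matrix.Norms.L2Operator in
lemma psd_sqrt_exists {A : Matrix (Fin d) (Fin d) ℂ} (hA : A.PosSemidef) :
    ∃ S : Matrix (Fin d) (Fin d) ℂ, Sᴴ = S ∧ S * S = A :=
  ⟨CFC.sqrt A, (CFC.sqrt_nonneg A).posSemidef.1, CFC.sqrt_mul_sqrt_self A hA.nonneg⟩

lemma re_trace_mul_nonneg {M N : Matrix (Fin d) (Fin d) ℂ}
    (hM : M.PosSemidef) (hN : N.PosSemidef) : 0 ≤ ((M * N).trace).re := by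
  obtain ⟨S, hSh, hS⟩ := psd_sqrt_exists hM
  have e1 : M * N = S * (S * N) := by rw [← Matrix.mul_assoc, hS]
  rw [e1, Matrix.trace_mul_comm]
  have e2 : S * N * S = Sᴴ * N * S := by rw [hSh]
  rw [e2]
  exact re_trace_psd_nonneg (hN.conjTranspose_mul_mul_same _)

/-- monotonicity of the Frobenius norm under the Loewner order on PSD matrices -/
lemma frob_mono_psd {M N : Matrix (Fin d) (Fin d) ℂ}
    (hM : M.PosSemidef) (hNM : (N - M).PosSemidef) : frobNorm M ≤ frobNorm N := by
  have h1 : frobNorm M * frobNorm M ≤ frobNorm M * frobNorm N := by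
    rw [frob_sq, hM.1]
    have h2 : ((M * M).trace).re ≤ ((M * N).trace).re := by
      have h3 := re_trace_mul_nonneg hM hNM
      have h4 : (M * N).trace = (M * M).trace + (M * (N - M)).trace := by
        rw [← Matrix.trace_add, ← Matrix.mul_add]
        congr 1
        rw [add_sub_cancel]
      rw [h4, Complex.add_re]
      linarith
    have h5 := ip_le M N
    rw [hM.1] at h5
    exact le_trans h2 h5
  rcases eq_or_lt_of_le (frob_nonneg M) with h | h
  · rw [← h]; exact frob_nonneg N
  · exact le_of_mul_le_mul_left h1 h

lemma frob_mul_le_left {M : Matrix (Fin d) (Fin d) ℂ} (N : Matrix (Fin d) (Fin d) ℂ)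
    {t : ℝ} (ht : specNorm M ≤ t) : frobNorm (M * N) ≤ t * frobNorm N := by
  have ht0 : 0 ≤ t := le_trans (spec_nonneg M) ht
  refine le_of_sq (frob_nonneg _) (mul_nonneg ht0 (frob_nonneg N)) ?_
  rw [frob_sq]
  have hK := psd_shift M t ht
  have e : Nᴴ * ((((t : ℂ) ^ 2) • 1 - Mᴴ * M)) * N
      = ((t : ℂ) ^ 2) • (Nᴴ * N) - (M * N)ᴴ * (M * N) := by
    rw [Matrix.conjTranspose_mul, Matrix.mul_sub, Matrix.sub_mul]
    congr 1
    · rw [Matrix.mul_smul, Matrix.smul_mul, Matrix.mul_one]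
    · noncomm_ring
  have e2 : (M * N)ᴴ * (M * N)
      = ((t : ℂ) ^ 2) • (Nᴴ * N) - Nᴴ * ((((t : ℂ) ^ 2) • 1 - Mᴴ * M)) * N := by
    rw [e]; abel
  have hre : (((t : ℂ) ^ 2) • ((Nᴴ * N).trace)).re = t ^ 2 * ((Nᴴ * N).trace).re := by
    rw [smul_eq_mul, ← Complex.ofReal_pow, Complex.re_ofReal_mul]
  rw [e2, Matrix.trace_sub, Matrix.trace_smul, Complex.sub_re, hre]
  have h6 := re_trace_psd_nonneg (hK.conjTranspose_mul_mul_same N)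
  have h7 := frob_sq N
  nlinarith [frob_nonneg N]

lemma spec_conjT (M : Matrix (Fin d) (Fin d) ℂ) : specNorm Mᴴ = specNorm M := by
  rw [specNorm, specNorm, ← Matrix.star_eq_conjTranspose, map_star]
  rw [ContinuousLinearMap.star_eq_adjoint]
  exact LinearIsometryEquiv.norm_map ContinuousLinearMap.adjoint _

lemma frob_mul_le_right (M : Matrix (Fin d) (Fin d) ℂ) {N : Matrix (Fin d) (Fin d) ℂ}
    {t : ℝ} (ht : specNorm N ≤ t) : frobNorm (M * N) ≤ frobNorm M * t := by
  have h1 : frobNorm (M * N) = frobNorm (Nᴴ * Mᴴ) := by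
    rw [← Matrix.conjTranspose_mul, frob_conjTranspose]
  rw [h1]
  have ht' : specNorm Nᴴ ≤ t := by rw [spec_conjT]; exact ht
  calc frobNorm (Nᴴ * Mᴴ) ≤ t * frobNorm Mᴴ := frob_mul_le_left Mᴴ ht'
  _ = frobNorm M * t := by rw [frob_conjTranspose]; ring

lemma spec_proj_le_one {P : Matrix (Fin d) (Fin d) ℂ}
    (hP : P.IsHermitian) (hPP : P * P = P) : specNorm P ≤ 1 := by
  have h1 : specNorm P * specNorm P = specNorm P := by
    rw [specNorm]
    rw [← CStarRing.norm_star_mul_self]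
    rw [← map_star, ← _root_.map_mul, Matrix.star_eq_conjTranspose, hP.eq, hPP]
  nlinarith [spec_nonneg P]

lemma spec_sqrt_le_one {S A : Matrix (Fin d) (Fin d) ℂ} (hSh : Sᴴ = S)
    (hSS : S * S = A) (hA : specNorm A ≤ 1) : specNorm S ≤ 1 := by
  have h1 : specNorm S * specNorm S = specNorm A := by
    rw [specNorm, specNorm, ← CStarRing.norm_star_mul_self, ← map_star, ← _root_.map_mul,
      Matrix.star_eq_conjTranspose, hSh, hSS]
  nlinarith [spec_nonneg S]

lemma spec_add_le (M N : Matrix (Fin d) (Fin d) ℂ) :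
    specNorm (M + N) ≤ specNorm M + specNorm N := by
  rw [specNorm, specNorm, specNorm, map_add]; exact norm_add_le _ _

lemma spec_sub_le (M N : Matrix (Fin d) (Fin d) ℂ) :
    specNorm (M - N) ≤ specNorm M + specNorm N := by
  rw [specNorm, specNorm, specNorm, map_sub]; exact norm_sub_le _ _

/-- Core lemma: `A` is close to being a projection. -/
lemma defect_bound {A B C D P Q : Matrix (Fin d) (Fin d) ℂ}
    (hA : A.PosSemidef) (hB : B.PosSemidef) (hC : C.PosSemidef) (hD : D.PosSemidef)
    (hsA : specNorm A ≤ 1)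
    (hPh : P.IsHermitian) (hPP : P * P = P) (hQh : Q.IsHermitian) (hQQ : Q * Q = Q) :
    frobNorm (A - A * A) ≤
      frobNorm (A + B - P) + frobNorm (A + C - Q)
        + frobNorm ((A + B - P) + (A + C - Q) - (A + B + C + D - 1)) := by
  obtain ⟨S, hSh, hS⟩ := psd_sqrt_exists hA
  have hAh : Aᴴ = A := hA.1
  have hSA : S * A = A * S := by
    conv_lhs => rw [← hS]
    conv_rhs => rw [← hS]
    rw [Matrix.mul_assoc]
  have h1A : (1 - A).PosSemidef := psd_one_sub hA hsA
  have hMh : (A - A * A)ᴴ = A - A * A := by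
    rw [Matrix.conjTranspose_sub, Matrix.conjTranspose_mul, hAh]
  have hSAS : S * A * S = A * A := by
    rw [Matrix.mul_assoc, ← hSA, ← Matrix.mul_assoc, hS]
  have hMeq : Sᴴ * (1 - A) * S = A - A * A := by
    rw [hSh, Matrix.mul_sub, Matrix.mul_one, Matrix.sub_mul, hS, hSAS]
  have hMpsd : (A - A * A).PosSemidef := hMeq ▸ h1A.conjTranspose_mul_mul_same S
  have hcomm : S * (A - A * A) = (A - A * A) * S := by
    rw [Matrix.mul_sub, Matrix.sub_mul, hSA]
    congr 1
    calc S * (A * A) = S * A * A := by rw [Matrix.mul_assoc]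
      _ = A * S * A := by rw [hSA]
      _ = A * (S * A) := by rw [Matrix.mul_assoc]
      _ = A * (A * S) := by rw [hSA]
      _ = A * A * S := by rw [Matrix.mul_assoc]
  have hWeq' : S * (A - A * A) * S = A * (A - A * A) := by
    rw [hcomm, Matrix.mul_assoc, hS]
    noncomm_ring
  have hWeq : Sᴴ * (A - A * A) * S = A * (A - A * A) := by rw [hSh, hWeq']
  have hWpsd : (A * (A - A * A)).PosSemidef := hWeq ▸ hMpsd.conjTranspose_mul_mul_same S
  have hWh : (A * (A - A * A))ᴴ = A * (A - A * A) := hWpsd.1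
  -- projector facts
  have hFh : (1 - P)ᴴ = 1 - P := by
    rw [Matrix.conjTranspose_sub, Matrix.conjTranspose_one, hPh.eq]
  have hFP : (1 - P) * P = 0 := by rw [Matrix.sub_mul, Matrix.one_mul, hPP, sub_self]
  have hFF : (1 - P) * (1 - P) = 1 - P := by rw [Matrix.mul_sub, Matrix.mul_one, hFP, sub_zero]
  have specF : specNorm (1 - P) ≤ 1 := spec_proj_le_one hFh hFF
  have hGh : (1 - Q)ᴴ = 1 - Q := by
    rw [Matrix.conjTranspose_sub, Matrix.conjTranspose_one, hQh.eq]
  have hGQ : (1 - Q) * Q = 0 := by rw [Matrix.sub_mul, Matrix.one_mul, hQQ, sub_self]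
  have hGG : (1 - Q) * (1 - Q) = 1 - Q := by rw [Matrix.mul_sub, Matrix.mul_one, hGQ, sub_zero]
  have specG : specNorm (1 - Q) ≤ 1 := spec_proj_le_one hGh hGG
  -- compressions are small
  have hFAF : frobNorm ((1 - P) * A * (1 - P)) ≤ frobNorm (A + B - P) := by
    have hpsd : ((1 - P) * A * (1 - P)).PosSemidef := by
      have := hA.conjTranspose_mul_mul_same (1 - P); rwa [hFh] at this
    have hdiff : ((1 - P) * (A + B - P) * (1 - P)) - ((1 - P) * A * (1 - P))
        = (1 - P)ᴴ * B * (1 - P) := by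
      rw [hFh]
      rw [show ((1 - P) * (A + B - P) * (1 - P)) - ((1 - P) * A * (1 - P))
          = ((1 - P) * B - (1 - P) * P) * (1 - P) by noncomm_ring]
      rw [hFP, sub_zero]
    have hmono := frob_mono_psd hpsd (hdiff ▸ hB.conjTranspose_mul_mul_same (1 - P))
    calc frobNorm ((1 - P) * A * (1 - P)) ≤ frobNorm ((1 - P) * (A + B - P) * (1 - P)) := hmono
      _ ≤ frobNorm ((1 - P) * (A + B - P)) * 1 := frob_mul_le_right _ specF
      _ = frobNorm ((1 - P) * (A + B - P)) := mul_one _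
      _ ≤ 1 * frobNorm (A + B - P) := frob_mul_le_left _ specF
      _ = frobNorm (A + B - P) := one_mul _
  have hGAG : frobNorm ((1 - Q) * A * (1 - Q)) ≤ frobNorm (A + C - Q) := by
    have hpsd : ((1 - Q) * A * (1 - Q)).PosSemidef := by
      have := hA.conjTranspose_mul_mul_same (1 - Q); rwa [hGh] at this
    have hdiff : ((1 - Q) * (A + C - Q) * (1 - Q)) - ((1 - Q) * A * (1 - Q))
        = (1 - Q)ᴴ * C * (1 - Q) := by
      rw [hGh]
      rw [show ((1 - Q) * (A + C - Q) * (1 - Q)) - ((1 - Q) * A * (1 - Q))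
          = ((1 - Q) * C - (1 - Q) * Q) * (1 - Q) by noncomm_ring]
      rw [hGQ, sub_zero]
    have hmono := frob_mono_psd hpsd (hdiff ▸ hC.conjTranspose_mul_mul_same (1 - Q))
    calc frobNorm ((1 - Q) * A * (1 - Q)) ≤ frobNorm ((1 - Q) * (A + C - Q) * (1 - Q)) := hmono
      _ ≤ frobNorm ((1 - Q) * (A + C - Q)) * 1 := frob_mul_le_right _ specG
      _ = frobNorm ((1 - Q) * (A + C - Q)) := mul_one _
      _ ≤ 1 * frobNorm (A + C - Q) := frob_mul_le_left _ specG
      _ = frobNorm (A + C - Q) := one_mul _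
  -- sandwich norms
  have nsand : ∀ R : Matrix (Fin d) (Fin d) ℂ, Rᴴ = R → R * R = R →
      frobNorm (S * R * S) = frobNorm (R * A * R) := by
    intro R hRh hRR
    refine eq_of_sq (frob_nonneg _) (frob_nonneg _) ?_
    rw [frob_sq, frob_sq]
    have c1 : (S * R * S)ᴴ = S * R * S := by
      rw [Matrix.conjTranspose_mul, Matrix.conjTranspose_mul, hSh, hRh]
      noncomm_ring
    have c2 : (R * A * R)ᴴ = R * A * R := by
      rw [Matrix.conjTranspose_mul, Matrix.conjTranspose_mul, hRh, hAh]
      noncomm_ring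
    rw [c1, c2]
    have l1 : (S * R * S) * (S * R * S) = S * (R * (S * S) * (R * S)) := by noncomm_ring
    rw [l1, hS, Matrix.trace_mul_comm]
    rw [show R * A * (R * S) * S = R * A * (R * (S * S)) by noncomm_ring, hS]
    -- LHS now : tr (R * A * (R * A))
    have r1 : (R * A * R) * (R * A * R) = (R * A * (R * R)) * (A * R) := by noncomm_ring
    rw [r1, hRR]
    rw [show R * A * R * (A * R) = (R * A * (R * A)) * R by noncomm_ring]
    conv_rhs => rw [Matrix.trace_mul_comm]
    rw [show R * (R * A * (R * A)) = (R * R) * (A * (R * A)) by noncomm_ring, hRR]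
    rw [show R * A * (R * A) = R * (A * (R * A)) by noncomm_ring]
  -- main estimate
  have hsplit : (1 : Matrix (Fin d) (Fin d) ℂ) - A
      = (1 - P) + (1 - Q)
        - ((A + B - P) + (A + C - Q) - (A + B + C + D - 1)) - D := by abel
  have e1 : (A - A * A)ᴴ * (A - A * A) = (A * (A - A * A)) * (1 - A) := by
    rw [hMh]; noncomm_ring
  have e2 : (A * (A - A * A)) * (1 - A)
      = (A * (A - A * A)) * (1 - P) + (A * (A - A * A)) * (1 - Q)
        - (A * (A - A * A)) * ((A + B - P) + (A + C - Q) - (A + B + C + D - 1))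
        - (A * (A - A * A)) * D := by
    conv_lhs => rw [hsplit]
    noncomm_ring
  have e0 : frobNorm (A - A * A) * frobNorm (A - A * A)
      = ((A * (A - A * A)) * (1 - P)).trace.re + ((A * (A - A * A)) * (1 - Q)).trace.re
        - ((A * (A - A * A)) * ((A + B - P) + (A + C - Q) - (A + B + C + D - 1))).trace.re
        - ((A * (A - A * A)) * D).trace.re := by
    rw [frob_sq, e1, e2, Matrix.trace_sub, Matrix.trace_sub, Matrix.trace_add,
      Complex.sub_re, Complex.sub_re, Complex.add_re]
  -- bound for the 1-P and 1-Q terms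
  have bR : ∀ R E : Matrix (Fin d) (Fin d) ℂ, Rᴴ = R → R * R = R →
      frobNorm (R * A * R) ≤ frobNorm E →
      ((A * (A - A * A)) * R).trace.re ≤ frobNorm (A - A * A) * frobNorm E := by
    intro R E hRh hRR hRE
    have tF : ((A * (A - A * A)) * R).trace = ((A - A * A) * (S * R * S)).trace := by
      rw [← hWeq']
      rw [show S * (A - A * A) * S * R = S * ((A - A * A) * (S * R)) by noncomm_ring]
      rw [Matrix.trace_mul_comm]
      rw [show (A - A * A) * (S * R) * S = (A - A * A) * (S * R * S) by noncomm_ring]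
    have hcs := ip_le (A - A * A) (S * R * S)
    rw [hMh] at hcs
    rw [tF]
    calc ((A - A * A) * (S * R * S)).trace.re
        ≤ frobNorm (A - A * A) * frobNorm (S * R * S) := hcs
      _ = frobNorm (A - A * A) * frobNorm (R * A * R) := by rw [nsand R hRh hRR]
      _ ≤ frobNorm (A - A * A) * frobNorm E :=
          mul_le_mul_of_nonneg_left hRE (frob_nonneg _)
  have bF := bR (1 - P) (A + B - P) hFh hFF hFAF
  have bG := bR (1 - Q) (A + C - Q) hGh hGG hGAG
  -- V term
  have bV : -(((A * (A - A * A)) * ((A + B - P) + (A + C - Q) - (A + B + C + D - 1))).trace.re)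
      ≤ frobNorm (A - A * A)
        * frobNorm ((A + B - P) + (A + C - Q) - (A + B + C + D - 1)) := by
    have h2 := ip_le (A * (A - A * A)) (-((A + B - P) + (A + C - Q) - (A + B + C + D - 1)))
    rw [hWh, Matrix.mul_neg, Matrix.trace_neg, Complex.neg_re, frob_neg] at h2
    have h3 : frobNorm (A * (A - A * A)) ≤ 1 * frobNorm (A - A * A) :=
      frob_mul_le_left _ hsA
    rw [one_mul] at h3
    calc -(((A * (A - A * A)) * ((A + B - P) + (A + C - Q) - (A + B + C + D - 1))).trace.re)
        ≤ frobNorm (A * (A - A * A))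
          * frobNorm ((A + B - P) + (A + C - Q) - (A + B + C + D - 1)) := h2
      _ ≤ frobNorm (A - A * A)
          * frobNorm ((A + B - P) + (A + C - Q) - (A + B + C + D - 1)) :=
          mul_le_mul_of_nonneg_right h3 (frob_nonneg _)
  have bD : 0 ≤ ((A * (A - A * A)) * D).trace.re := re_trace_mul_nonneg hWpsd hD
  have key : frobNorm (A - A * A) * frobNorm (A - A * A)
      ≤ frobNorm (A - A * A)
        * (frobNorm (A + B - P) + frobNorm (A + C - Q)
            + frobNorm ((A + B - P) + (A + C - Q) - (A + B + C + D - 1))) := by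
    rw [e0, mul_add, mul_add]
    linarith
  rcases eq_or_lt_of_le (frob_nonneg (A - A * A)) with h | h
  · rw [← h]
    have := frob_nonneg (A + B - P)
    have := frob_nonneg (A + C - Q)
    have := frob_nonneg ((A + B - P) + (A + C - Q) - (A + B + C + D - 1))
    linarith
  · exact le_of_mul_le_mul_left key h

end Stmt6Aux

open Matrix Stmt6Aux in
/-- For PSD matrices `A, B, C, D` with operator norms ≤ 1 and projectors
`P, Q`, if `A+B ≈_ε P`, `A+C ≈_ε Q` and `A+B+C+D ≈_ε I` in normalized Frobenius norm,
then `(1/√d)‖AB‖_F = O(ε)` with an absolute implied constant. -/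
theorem stmt6 :
    ∃ Cst : ℝ, 0 < Cst ∧
      ∀ (d : ℕ) (_ : 0 < d) (ε : ℝ) (A B C D P Q : Matrix (Fin d) (Fin d) ℂ),
        A.PosSemidef → B.PosSemidef → C.PosSemidef → D.PosSemidef →
        specNorm A ≤ 1 → specNorm B ≤ 1 → specNorm C ≤ 1 → specNorm D ≤ 1 →
        P.IsHermitian → P * P = P → Q.IsHermitian → Q * Q = Q →
        frobNorm (A + B - P) / Real.sqrt d ≤ ε →
        frobNorm (A + C - Q) / Real.sqrt d ≤ ε →
        frobNorm (A + B + C + D - 1) / Real.sqrt d ≤ ε →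
        frobNorm (A * B) / Real.sqrt d ≤ Cst * ε := by
  refine ⟨12, by norm_num, ?_⟩
  intro d hd ε A B C D P Q hA hB hC hD sA sB sC sD hPh hPP hQh hQQ h1 h2 h3
  have hsd : 0 < Real.sqrt d := Real.sqrt_pos.mpr (by exact_mod_cast hd)
  have hε : 0 ≤ ε := le_trans (div_nonneg (frob_nonneg _) hsd.le) h1
  set e := ε * Real.sqrt d with he
  have he0 : 0 ≤ e := mul_nonneg hε hsd.le
  have nX : frobNorm (A + B - P) ≤ e := by
    rw [div_le_iff₀ hsd] at h1; exact h1
  have nY : frobNorm (A + C - Q) ≤ e := by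
    rw [div_le_iff₀ hsd] at h2; exact h2
  have nZ : frobNorm (A + B + C + D - 1) ≤ e := by
    rw [div_le_iff₀ hsd] at h3; exact h3
  -- defect bound for A
  have dA0 := defect_bound hA hB hC hD sA hPh hPP hQh hQQ
  have dA : frobNorm (A - A * A) ≤ 5 * e := by
    have eV : (A + B - P) + (A + C - Q) - (A + B + C + D - 1)
        = (A + B - P) + ((A + C - Q) - (A + B + C + D - 1)) := by abel
    have hV : frobNorm ((A + B - P) + (A + C - Q) - (A + B + C + D - 1))
        ≤ e + (e + e) := by
      rw [eV]
      calc frobNorm ((A + B - P) + ((A + C - Q) - (A + B + C + D - 1)))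
          ≤ frobNorm (A + B - P) + frobNorm ((A + C - Q) - (A + B + C + D - 1)) :=
            frob_add_le _ _
        _ ≤ e + (frobNorm (A + C - Q) + frobNorm (A + B + C + D - 1)) :=
            add_le_add nX (frob_sub_le _ _)
        _ ≤ e + (e + e) := by linarith
    linarith
  -- defect bound for B, with (A,B,C,D,P,Q) ↦ (B,A,D,C,P,1-Q)
  have hQ'h : (1 - Q).IsHermitian := by
    rw [Matrix.IsHermitian, Matrix.conjTranspose_sub, Matrix.conjTranspose_one, hQh.eq]
  have hQ'Q' : (1 - Q) * (1 - Q) = 1 - Q := by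
    have hGQ : (1 - Q) * Q = 0 := by rw [Matrix.sub_mul, Matrix.one_mul, hQQ, sub_self]
    rw [Matrix.mul_sub, Matrix.mul_one, hGQ, sub_zero]
  have dB0 := defect_bound hB hA hD hC sB hPh hPP hQ'h hQ'Q'
  have dB : frobNorm (B - B * B) ≤ 5 * e := by
    have e1 : B + A - P = A + B - P := by abel
    have e2 : B + D - (1 - Q) = (A + B + C + D - 1) - (A + C - Q) := by abel
    have e3 : (B + A - P) + (B + D - (1 - Q)) - (B + A + D + C - 1)
        = (A + B - P) - (A + C - Q) := by abel
    rw [e3, e1, e2] at dB0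
    have h4 : frobNorm ((A + B + C + D - 1) - (A + C - Q)) ≤ e + e :=
      le_trans (frob_sub_le _ _) (by linarith)
    have h5 : frobNorm ((A + B - P) - (A + C - Q)) ≤ e + e :=
      le_trans (frob_sub_le _ _) (by linarith)
    linarith
  -- the anticommutator is small
  have spX : specNorm (A + B - P) ≤ 3 := by
    have hP1 := spec_proj_le_one hPh hPP
    calc specNorm (A + B - P) ≤ specNorm (A + B) + specNorm P := spec_sub_le _ _
      _ ≤ (specNorm A + specNorm B) + specNorm P := by
          have := spec_add_le A B; linarith
      _ ≤ 3 := by linarith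
  have hid : A * B + B * A + P - P * P
      = (A - A * A) + (B - B * B) - (A + B - P) + P * (A + B - P) + (A + B - P) * P
        + (A + B - P) * (A + B - P) := by noncomm_ring
  have hW : A * B + B * A
      = (A - A * A) + (B - B * B) - (A + B - P) + P * (A + B - P) + (A + B - P) * P
        + (A + B - P) * (A + B - P) := by
    rw [← hid, hPP]
    abel
  have hP1 := spec_proj_le_one hPh hPP
  have nW : frobNorm (A * B + B * A) ≤ 16 * e := by
    rw [hW]
    have t1 : frobNorm (P * (A + B - P)) ≤ 1 * frobNorm (A + B - P) :=
      frob_mul_le_left _ hP1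
    have t2 : frobNorm ((A + B - P) * P) ≤ frobNorm (A + B - P) * 1 :=
      frob_mul_le_right _ hP1
    have t3 : frobNorm ((A + B - P) * (A + B - P)) ≤ 3 * frobNorm (A + B - P) :=
      frob_mul_le_left _ spX
    calc frobNorm ((A - A * A) + (B - B * B) - (A + B - P) + P * (A + B - P)
          + (A + B - P) * P + (A + B - P) * (A + B - P))
        ≤ frobNorm ((A - A * A) + (B - B * B) - (A + B - P) + P * (A + B - P)
          + (A + B - P) * P) + frobNorm ((A + B - P) * (A + B - P)) := frob_add_le _ _
      _ ≤ (frobNorm ((A - A * A) + (B - B * B) - (A + B - P) + P * (A + B - P))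
          + frobNorm ((A + B - P) * P)) + frobNorm ((A + B - P) * (A + B - P)) := by
            have := frob_add_le ((A - A * A) + (B - B * B) - (A + B - P)
              + P * (A + B - P)) ((A + B - P) * P)
            linarith
      _ ≤ ((frobNorm ((A - A * A) + (B - B * B) - (A + B - P))
          + frobNorm (P * (A + B - P))) + frobNorm ((A + B - P) * P))
          + frobNorm ((A + B - P) * (A + B - P)) := by
            have := frob_add_le ((A - A * A) + (B - B * B) - (A + B - P))
              (P * (A + B - P))
            linarith
      _ ≤ (((frobNorm ((A - A * A) + (B - B * B)) + frobNorm (A + B - P))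
          + frobNorm (P * (A + B - P))) + frobNorm ((A + B - P) * P))
          + frobNorm ((A + B - P) * (A + B - P)) := by
            have := frob_sub_le ((A - A * A) + (B - B * B)) (A + B - P)
            linarith
      _ ≤ 16 * e := by
        have := frob_add_le (A - A * A) (B - B * B)
        linarith
  -- 2‖AB‖² ≤ ‖AB+BA‖²
  have hABh : (A * B)ᴴ = B * A := by rw [Matrix.conjTranspose_mul, hA.1, hB.1]
  have hWherm : (A * B + B * A)ᴴ = A * B + B * A := by
    rw [Matrix.conjTranspose_add, hABh, Matrix.conjTranspose_mul, hA.1, hB.1]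
    abel
  have hstep5 : 2 * (frobNorm (A * B) * frobNorm (A * B))
      ≤ frobNorm (A * B + B * A) * frobNorm (A * B + B * A) := by
    obtain ⟨S, hSh, hS⟩ := psd_sqrt_exists hA
    have hNpsd : (Sᴴ * B * S).PosSemidef := hB.conjTranspose_mul_mul_same S
    rw [hSh] at hNpsd
    have hNh : (S * B * S)ᴴ = S * B * S := hNpsd.1
    have τpos : 0 ≤ ((A * B) * (A * B)).trace.re := by
      have eτ : ((A * B) * (A * B)).trace = ((S * B * S) * (S * B * S)).trace := by
        rw [show (A * B) * (A * B) = S * ((S * B * S) * (S * B)) by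
          rw [← hS]; noncomm_ring]
        rw [Matrix.trace_mul_comm]
        rw [show (S * B * S) * (S * B) * S = (S * B * S) * (S * B * S) by noncomm_ring]
      rw [eτ]
      have := frob_sq (S * B * S)
      rw [hNh] at this
      rw [← this]
      exact mul_self_nonneg _
    have nab : frobNorm (A * B) * frobNorm (A * B) = ((B * A) * (A * B)).trace.re := by
      rw [frob_sq, hABh]
    have expand : (A * B + B * A) * (A * B + B * A)
        = (A * B) * (A * B) + (A * B) * (B * A) + (B * A) * (A * B)
          + (B * A) * (B * A) := by noncomm_ring
    have r1 : ((A * B) * (B * A)).trace = ((B * A) * (A * B)).trace :=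
      Matrix.trace_mul_comm _ _
    have r2 : ((B * A) * (B * A)).trace = ((A * B) * (A * B)).trace := by
      rw [show (B * A) * (B * A) = B * (A * B * A) by noncomm_ring,
        Matrix.trace_mul_comm,
        show A * B * A * B = (A * B) * (A * B) by noncomm_ring]
    have lhsW : frobNorm (A * B + B * A) * frobNorm (A * B + B * A)
        = ((A * B + B * A) * (A * B + B * A)).trace.re := by
      rw [frob_sq, hWherm]
    rw [lhsW, expand, Matrix.trace_add, Matrix.trace_add, Matrix.trace_add,
      Complex.add_re, Complex.add_re, Complex.add_re, r1, r2, nab]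
    linarith
  -- conclude
  have nAB : frobNorm (A * B) ≤ 12 * e := by
    have h6 : frobNorm (A * B + B * A) * frobNorm (A * B + B * A) ≤ (16 * e) * (16 * e) :=
      mul_le_mul nW nW (frob_nonneg _) (by positivity)
    refine le_of_sq (frob_nonneg _) (by positivity) ?_
    nlinarith [frob_nonneg (A * B)]
  rw [div_le_iff₀ hsd]
  calc frobNorm (A * B) ≤ 12 * e := nAB
  _ = 12 * ε * Real.sqrt d := by rw [he]; ring
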